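/- Let 0 < H < 1, α > 0 and let m ≥ 1 be a fixed integer. For ε > 0, integers n ≥ 2 and 1 ≤ i ≤ n−1, set d_{i,ε,n} = ((i/n)^{2H}/((i/n)^{2H}+ε))^{m+1/2} − ((i/n)^{2H}/((i/n)^{2H}+(1/2) n^{−2(α+H)}))^{m+1/2}, and define A_m(ε,n) = n^{−2} Σ_{1≤i≠j≤n−1} R_H(i/n, j/n)^{2m} (i/n)^{−H(2m+1)} (j/n)^{−H(2m+1)} d_{i,ε,n} d_{j,ε,n}. Then lim_{ε→0} limsup_{n→∞} |A_m(ε,n)| = 0. -/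

import Mathlib

open MeasureTheory Filter Topology Real
open scoped NNReal

/-- Covariance function of fractional Brownian motion with Hurst parameter `H`. -/
noncomputable def RH (H t s : ℝ) : ℝ :=
  (t ^ (2 * H) + s ^ (2 * H) - |t - s| ^ (2 * H)) / 2

/-- The coefficient `d_{i,ε,n}` (for fixed chaos order `m`). -/
noncomputable def dcoef (H α : ℝ) (m : ℕ) (ε : ℝ) (n i : ℕ) : ℝ :=
  (((i : ℝ) / n) ^ (2 * H) / (((i : ℝ) / n) ^ (2 * H) + ε)) ^ ((m : ℝ) + 1 / 2)
    - (((i : ℝ) / n) ^ (2 * H) /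
        (((i : ℝ) / n) ^ (2 * H) + (1 / 2) * (n : ℝ) ^ (-(2 : ℝ) * (α + H)))) ^
      ((m : ℝ) + 1 / 2)

/-- The quantity `A_m(ε,n)`. -/
noncomputable def Am (H α : ℝ) (m : ℕ) (ε : ℝ) (n : ℕ) : ℝ :=
  ((n : ℝ) ^ 2)⁻¹ *
    ∑ i ∈ Finset.Ico 1 n, ∑ j ∈ Finset.Ico 1 n,
      if i = j then 0 else
        RH H ((i : ℝ) / n) ((j : ℝ) / n) ^ (2 * m) *
          ((i : ℝ) / n) ^ (-(H * (2 * (m : ℝ) + 1))) *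
          ((j : ℝ) / n) ^ (-(H * (2 * (m : ℝ) + 1))) *
          dcoef H α m ε n i * dcoef H α m ε n j

lemma aux_rpow_add {x y p : ℝ} (hx : 0 ≤ x) (hy : 0 ≤ y) (hp : 0 ≤ p) (hp1 : p ≤ 1) :
    (x + y) ^ p ≤ x ^ p + y ^ p := by
  have h := NNReal.rpow_add_le_add_rpow x.toNNReal y.toNNReal hp hp1
  have h2 : ((x.toNNReal + y.toNNReal : ℝ≥0) : ℝ) = x + y := by
    simp [Real.coe_toNNReal, hx, hy]
  calc (x + y) ^ p = (((x.toNNReal + y.toNNReal : ℝ≥0) : ℝ)) ^ p := by rw [h2]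
    _ = (((x.toNNReal + y.toNNReal) ^ p : ℝ≥0) : ℝ) := by
        rw [← NNReal.coe_rpow]
    _ ≤ ((x.toNNReal ^ p + y.toNNReal ^ p : ℝ≥0) : ℝ) := by exact_mod_cast h
    _ = x ^ p + y ^ p := by
        rw [NNReal.coe_add, NNReal.coe_rpow, NNReal.coe_rpow,
          Real.coe_toNNReal _ hx, Real.coe_toNNReal _ hy]

lemma aux_abs_rpow_sub {t s p : ℝ} (ht : 0 ≤ t) (hs : 0 ≤ s) (hp : 0 ≤ p) (hp1 : p ≤ 1) :
    |t ^ p - s ^ p| ≤ |t - s| ^ p := by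
  rcases le_total s t with h | h
  · rw [abs_of_nonneg (by linarith : (0:ℝ) ≤ t - s)]
    rw [abs_of_nonneg (by
      have := Real.rpow_le_rpow hs h hp; linarith)]
    have : t ^ p ≤ (t - s) ^ p + s ^ p := by
      have := aux_rpow_add (x := t - s) (y := s) (by linarith) hs hp hp1
      rwa [sub_add_cancel] at this
    linarith
  · rw [abs_of_nonpos (by linarith : t - s ≤ 0)]
    rw [abs_of_nonpos (by
      have := Real.rpow_le_rpow ht h hp; linarith)]
    have : s ^ p ≤ (s - t) ^ p + t ^ p := by
      have := aux_rpow_add (x := s - t) (y := t) (by linarith) ht hp hp1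
      rwa [sub_add_cancel] at this
    simp only [neg_sub]
    linarith

lemma sq_2H {t H : ℝ} (ht : 0 ≤ t) : t ^ (2 * H) = (t ^ H) ^ 2 := by
  rw [← Real.rpow_natCast (t ^ H) 2, ← Real.rpow_mul ht]
  norm_num [mul_comm]

lemma RH_nonneg {H t s : ℝ} (hH : 0 < H) (ht : 0 ≤ t) (hs : 0 ≤ s) : 0 ≤ RH H t s := by
  have h1 : |t - s| ≤ max t s := by
    rcases le_total s t with h | h
    · rw [abs_of_nonneg (by linarith)]; exact le_trans (by linarith) (le_max_left _ _)
    · rw [abs_of_nonpos (by linarith)]; exact le_trans (by linarith) (le_max_right _ _)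
  have h2 : |t - s| ^ (2 * H) ≤ max t s ^ (2 * H) :=
    Real.rpow_le_rpow (abs_nonneg _) h1 (by positivity)
  have h3 : max t s ^ (2 * H) ≤ t ^ (2 * H) + s ^ (2 * H) := by
    rcases max_cases t s with ⟨he, _⟩ | ⟨he, _⟩ <;> rw [he]
    · nlinarith [Real.rpow_nonneg hs (2 * H)]
    · nlinarith [Real.rpow_nonneg ht (2 * H)]
  unfold RH; linarith

lemma RH_le {H t s : ℝ} (hH : 0 < H) (hH1 : H ≤ 1) (ht : 0 ≤ t) (hs : 0 ≤ s) :
    RH H t s ≤ t ^ H * s ^ H := by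
  have key : |t ^ H - s ^ H| ≤ |t - s| ^ H := aux_abs_rpow_sub ht hs hH.le hH1
  have h1 : (t ^ H - s ^ H) ^ 2 ≤ (|t - s| ^ H) ^ 2 := by
    rw [← sq_abs (t ^ H - s ^ H)]
    exact pow_le_pow_left₀ (abs_nonneg _) key 2
  rw [show RH H t s = (t ^ (2*H) + s ^ (2*H) - |t-s| ^ (2*H)) / 2 from rfl,
    sq_2H ht, sq_2H hs, sq_2H (abs_nonneg (t - s))]
  nlinarith

lemma bern_upper {y p : ℝ} (h0 : 0 ≤ y) (h1 : y ≤ 1) (hp : 1 ≤ p) :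
    1 - y ^ p ≤ p * (1 - y) := by
  have h := one_add_mul_self_le_rpow_one_add (s := y - 1) (by linarith) hp
  rw [show (1 : ℝ) + (y - 1) = y by ring] at h
  linarith

lemma min_le_rpow {u θ : ℝ} (hu : 0 < u) (hθ0 : 0 < θ) (hθ1 : θ ≤ 1) :
    min 1 u ≤ u ^ θ := by
  rcases le_total u 1 with h | h
  · rw [min_eq_right h]
    calc u = u ^ (1:ℝ) := (Real.rpow_one u).symm
      _ ≤ u ^ θ := Real.rpow_le_rpow_of_exponent_ge hu h hθ1
  · rw [min_eq_left h]
    exact Real.one_le_rpow h hθ0.le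

lemma dterm_bound {x e p θ : ℝ} (hx : 0 < x) (he : 0 < e) (hp : 1 ≤ p)
    (hθ0 : 0 < θ) (hθ1 : θ ≤ 1) :
    1 - (x / (x + e)) ^ p ≤ (p * e / x) ^ θ := by
  have hxe : 0 < x + e := by linarith
  have hy1 : x / (x + e) ≤ 1 := by rw [div_le_one hxe]; linarith
  have hy0 : 0 ≤ x / (x + e) := by positivity
  have h1 : 1 - (x / (x + e)) ^ p ≤ p * (1 - x / (x + e)) := bern_upper hy0 hy1 hp
  have h2 : 1 - x / (x + e) = e / (x + e) := by field_simp; ring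
  have h3 : p * (e / (x + e)) ≤ p * e / x := by
    rw [mul_div_assoc]
    apply mul_le_mul_of_nonneg_left _ (by linarith)
    apply div_le_div_of_nonneg_left he.le hx (by linarith)
  have h4 : 1 - (x / (x + e)) ^ p ≤ min 1 (p * e / x) := by
    apply le_min
    · have : 0 ≤ (x / (x + e)) ^ p := Real.rpow_nonneg hy0 p
      linarith
    · rw [h2] at h1; linarith
  exact h4.trans (min_le_rpow (by positivity) hθ0 hθ1)

lemma concave_key {a β : ℝ} (ha : 1 ≤ a) (hβ0 : 0 < β) (hβ1 : β < 1) :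
    (1 - β) * a ^ (-β) ≤ a ^ (1 - β) - (a - 1) ^ (1 - β) := by
  have ha0 : 0 < a := by linarith
  have hfrac : 1 / a ≤ 1 := by rw [div_le_one ha0]; exact ha
  have hs : -1 ≤ -(1/a) := by linarith
  have h := rpow_one_add_le_one_add_mul_self (s := -(1/a)) hs (by linarith)
    (by linarith : 1 - β ≤ 1)
  have hpos : (0:ℝ) ≤ 1 + -(1/a) := by linarith
  have e1 : (a - 1) ^ (1 - β) = a ^ (1 - β) * (1 + -(1/a)) ^ (1 - β) := by
    rw [← Real.mul_rpow ha0.le hpos]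
    congr 1
    field_simp
    ring
  have epow : a ^ (1 - β) * (1/a) = a ^ (-β) := by
    rw [one_div, ← Real.rpow_neg_one a, ← Real.rpow_add ha0]
    ring_nf
  have key : (a - 1) ^ (1 - β) ≤ a ^ (1 - β) - (1 - β) * a ^ (-β) := by
    calc (a - 1) ^ (1 - β) = a ^ (1 - β) * (1 + -(1/a)) ^ (1 - β) := e1
      _ ≤ a ^ (1 - β) * (1 + (1 - β) * -(1/a)) :=
          mul_le_mul_of_nonneg_left h (Real.rpow_nonneg ha0.le _)
      _ = a ^ (1 - β) - (1 - β) * (a ^ (1 - β) * (1/a)) := by ring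
      _ = a ^ (1 - β) - (1 - β) * a ^ (-β) := by rw [epow]
  linarith

lemma sum_rpow_bound {β : ℝ} (hβ0 : 0 < β) (hβ1 : β < 1) (n : ℕ) :
    ∑ i ∈ Finset.Ico 1 n, ((i : ℝ) / n) ^ (-β) ≤ (n : ℝ) / (1 - β) := by
  rcases Nat.eq_zero_or_pos n with rfl | hn
  · simp
  have hn0 : (0 : ℝ) < n := by exact_mod_cast hn
  have step : ∀ i ∈ Finset.Ico 1 n, ((i : ℝ) / n) ^ (-β)
      ≤ (n : ℝ) ^ β / (1 - β) * ((i : ℝ) ^ (1 - β) - ((i : ℝ) - 1) ^ (1 - β)) := by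
    intro i hi
    obtain ⟨hi1, hin⟩ := Finset.mem_Ico.mp hi
    have hi1' : (1 : ℝ) ≤ i := by exact_mod_cast hi1
    have e1 : ((i : ℝ) / n) ^ (-β) = (n : ℝ) ^ β * (i : ℝ) ^ (-β) := by
      rw [Real.div_rpow (by linarith) hn0.le, Real.rpow_neg hn0.le, div_inv_eq_mul,
        mul_comm]
    rw [e1]
    have h2 := concave_key hi1' hβ0 hβ1
    have hβ' : (0:ℝ) < 1 - β := by linarith
    rw [div_mul_eq_mul_div, le_div_iff₀ hβ',
      show (n:ℝ) ^ β * (i:ℝ) ^ (-β) * (1 - β) = (n:ℝ) ^ β * ((1 - β) * (i:ℝ) ^ (-β)) from by ring]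
    exact mul_le_mul_of_nonneg_left h2 (Real.rpow_nonneg hn0.le β)
  have tele : ∑ i ∈ Finset.Ico 1 n, ((i : ℝ) ^ (1 - β) - ((i : ℝ) - 1) ^ (1 - β))
      = ((n : ℝ) - 1) ^ (1 - β) := by
    have := Finset.sum_Ico_eq_sum_range
      (f := fun i => ((i : ℝ) ^ (1 - β) - ((i : ℝ) - 1) ^ (1 - β))) (m := 1) (n := n)
    rw [this]
    have e2 : ∀ k : ℕ, ((1 + k : ℕ) : ℝ) ^ (1 - β) - (((1 + k : ℕ) : ℝ) - 1) ^ (1 - β)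
        = (fun j : ℕ => ((j : ℝ)) ^ (1 - β)) (k + 1) - (fun j : ℕ => ((j : ℝ)) ^ (1 - β)) k := by
      intro k
      simp only
      congr 2 <;> push_cast <;> ring
    rw [Finset.sum_congr rfl (fun k _ => e2 k), Finset.sum_range_sub
      (f := fun j : ℕ => ((j : ℝ)) ^ (1 - β)) (n := n - 1)]
    have h0 : ((0:ℕ):ℝ) ^ (1 - β) = 0 := by
      rw [Nat.cast_zero, Real.zero_rpow (by linarith)]
    rw [h0, sub_zero]
    congr 1
    push_cast [Nat.cast_sub hn]
    ring
  calc ∑ i ∈ Finset.Ico 1 n, ((i : ℝ) / n) ^ (-β)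
      ≤ ∑ i ∈ Finset.Ico 1 n, (n : ℝ) ^ β / (1 - β) * ((i : ℝ) ^ (1 - β) - ((i : ℝ) - 1) ^ (1 - β)) :=
        Finset.sum_le_sum step
    _ = (n : ℝ) ^ β / (1 - β) * ((n : ℝ) - 1) ^ (1 - β) := by rw [← Finset.mul_sum, tele]
    _ ≤ (n : ℝ) ^ β / (1 - β) * (n : ℝ) ^ (1 - β) := by
        apply mul_le_mul_of_nonneg_left _
          (div_nonneg (Real.rpow_nonneg hn0.le β) (by linarith))
        have h1n : (1:ℝ) ≤ n := by exact_mod_cast hn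
        exact Real.rpow_le_rpow (by linarith) (by linarith) (by linarith)
    _ = (n : ℝ) / (1 - β) := by
        rw [div_mul_eq_mul_div, ← Real.rpow_add hn0]
        norm_num

lemma pair_bound {H : ℝ} (hH : 0 < H) (hH1 : H ≤ 1) (m : ℕ) {t s : ℝ}
    (ht : 0 < t) (hs : 0 < s) :
    RH H t s ^ (2 * m) * t ^ (-(H * (2 * (m : ℝ) + 1))) * s ^ (-(H * (2 * (m : ℝ) + 1)))
      ≤ t ^ (-H) * s ^ (-H) := by
  have h1 : RH H t s ^ (2 * m) ≤ (t ^ H * s ^ H) ^ (2 * m) :=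
    pow_le_pow_left₀ (RH_nonneg hH ht.le hs.le) (RH_le hH hH1 ht.le hs.le) (2 * m)
  have e1 : ∀ u : ℝ, 0 < u → (u ^ H) ^ (2 * m) = u ^ (H * (2 * (m : ℝ))) := by
    intro u hu
    rw [← Real.rpow_natCast (u ^ H) (2 * m), ← Real.rpow_mul hu.le]
    push_cast; ring_nf
  have e2 : ∀ u : ℝ, 0 < u →
      u ^ (H * (2 * (m : ℝ))) * u ^ (-(H * (2 * (m : ℝ) + 1))) = u ^ (-H) := by
    intro u hu
    rw [← Real.rpow_add hu]
    congr 1; ring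
  calc RH H t s ^ (2 * m) * t ^ (-(H * (2 * (m : ℝ) + 1))) * s ^ (-(H * (2 * (m : ℝ) + 1)))
      ≤ (t ^ H * s ^ H) ^ (2 * m) * t ^ (-(H * (2 * (m : ℝ) + 1)))
          * s ^ (-(H * (2 * (m : ℝ) + 1))) := by
        apply mul_le_mul_of_nonneg_right _ (Real.rpow_nonneg hs.le _)
        exact mul_le_mul_of_nonneg_right h1 (Real.rpow_nonneg ht.le _)
    _ = (t ^ (H * (2 * (m : ℝ))) * t ^ (-(H * (2 * (m : ℝ) + 1))))
          * (s ^ (H * (2 * (m : ℝ))) * s ^ (-(H * (2 * (m : ℝ) + 1)))) := by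
        rw [mul_pow, e1 t ht, e1 s hs]; ring
    _ = t ^ (-H) * s ^ (-H) := by rw [e2 t ht, e2 s hs]

lemma dcoef_abs_le {H α ε θ : ℝ} {m n i : ℕ} (hH : 0 < H) (hα : 0 < α) (hε : 0 < ε)
    (hθ0 : 0 < θ) (hθ1 : θ ≤ 1) (hm : 1 ≤ m) (hi1 : 1 ≤ i) (hn : 0 < n) :
    |dcoef H α m ε n i| ≤
      (((((m : ℝ) + 1/2) * ε) ^ θ +
        (((m : ℝ) + 1/2) * ((1/2) * (n : ℝ) ^ (-(2 : ℝ) * (α + H)))) ^ θ))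
        * ((i : ℝ) / n) ^ (2 * H * (-θ)) := by
  have hin : (0 : ℝ) < (i : ℝ) / n := by
    apply div_pos (by exact_mod_cast hi1) (by exact_mod_cast hn)
  set t : ℝ := (i : ℝ) / n with hts
  have hx : (0 : ℝ) < t ^ (2 * H) := Real.rpow_pos_of_pos hin _
  have hnp : (0 : ℝ) < (n : ℝ) ^ (-(2 : ℝ) * (α + H)) :=
    Real.rpow_pos_of_pos (by exact_mod_cast hn) _
  have he2 : (0 : ℝ) < (1/2) * (n : ℝ) ^ (-(2 : ℝ) * (α + H)) := by positivity
  have hp : (1 : ℝ) ≤ (m : ℝ) + 1/2 := by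
    have : (1 : ℝ) ≤ (m : ℝ) := by exact_mod_cast hm
    linarith
  set p : ℝ := (m : ℝ) + 1/2
  set x : ℝ := t ^ (2 * H)
  set e2 : ℝ := (1/2) * (n : ℝ) ^ (-(2 : ℝ) * (α + H))
  have hA1 : (x / (x + ε)) ^ p ≤ 1 := by
    apply Real.rpow_le_one (by positivity) _ (by linarith)
    rw [div_le_one (by linarith)]; linarith
  have hB1 : (x / (x + e2)) ^ p ≤ 1 := by
    apply Real.rpow_le_one (by positivity) _ (by linarith)
    rw [div_le_one (by linarith)]; linarith
  have hA0 : 0 ≤ (x / (x + ε)) ^ p := Real.rpow_nonneg (by positivity) _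
  have hB0 : 0 ≤ (x / (x + e2)) ^ p := Real.rpow_nonneg (by positivity) _
  have hdef : dcoef H α m ε n i = (x / (x + ε)) ^ p - (x / (x + e2)) ^ p := rfl
  have habs : |dcoef H α m ε n i| ≤ (1 - (x / (x + ε)) ^ p) + (1 - (x / (x + e2)) ^ p) := by
    rw [hdef, abs_sub_le_iff]
    constructor <;> linarith
  have hd1 : 1 - (x / (x + ε)) ^ p ≤ (p * ε / x) ^ θ := dterm_bound hx hε hp hθ0 hθ1
  have hd2 : 1 - (x / (x + e2)) ^ p ≤ (p * e2 / x) ^ θ := dterm_bound hx he2 hp hθ0 hθ1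
  have hw : ∀ e : ℝ, 0 < e → (p * e / x) ^ θ = (p * e) ^ θ * t ^ (2 * H * (-θ)) := by
    intro e he
    rw [Real.div_rpow (by positivity) hx.le,
      show x ^ θ = t ^ (2 * H * θ) from (Real.rpow_mul hin.le (2 * H) θ).symm,
      div_eq_mul_inv, ← Real.rpow_neg hin.le,
      show -(2 * H * θ) = 2 * H * (-θ) by ring]
  rw [hw ε hε] at hd1
  rw [hw e2 he2] at hd2
  rw [add_mul]
  linarith

lemma Am_abs_le {H α ε θ β : ℝ} {m : ℕ} (hH : 0 < H) (hH1 : H < 1) (hα : 0 < α)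
    (hε : 0 < ε) (hθ0 : 0 < θ) (hθ1 : θ ≤ 1) (hm : 1 ≤ m)
    (hβ : β = H + 2 * H * θ) (hβ1 : β < 1) (n : ℕ) :
    |Am H α m ε n| ≤
      ((1 - β)⁻¹ * ((((m : ℝ) + 1/2) * ε) ^ θ +
        (((m : ℝ) + 1/2) * ((1/2) * (n : ℝ) ^ (-(2 : ℝ) * (α + H)))) ^ θ)) ^ 2 := by
  have hβ0 : 0 < β := by rw [hβ]; positivity
  set C : ℝ := ((((m : ℝ) + 1/2) * ε) ^ θ +
        (((m : ℝ) + 1/2) * ((1/2) * (n : ℝ) ^ (-(2 : ℝ) * (α + H)))) ^ θ) with hCdef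
  have hC : 0 ≤ C := by positivity
  rcases Nat.eq_zero_or_pos n with rfl | hn
  · simp [Am]
    positivity
  have hn0 : (0 : ℝ) < n := by exact_mod_cast hn
  set b : ℕ → ℝ := fun i => C * ((i : ℝ) / n) ^ (-β) with hbdef
  have hb0 : ∀ i, 0 ≤ b i := fun i => mul_nonneg hC (Real.rpow_nonneg (by positivity) _)
  have entry_le : ∀ i ∈ Finset.Ico 1 n, ∀ j ∈ Finset.Ico 1 n,
      |if i = j then 0 else
        RH H ((i : ℝ) / n) ((j : ℝ) / n) ^ (2 * m) *
          ((i : ℝ) / n) ^ (-(H * (2 * (m : ℝ) + 1))) *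
          ((j : ℝ) / n) ^ (-(H * (2 * (m : ℝ) + 1))) *
          dcoef H α m ε n i * dcoef H α m ε n j| ≤ b i * b j := by
    intro i hi j hj
    obtain ⟨hi1, hin⟩ := Finset.mem_Ico.mp hi
    obtain ⟨hj1, hjn⟩ := Finset.mem_Ico.mp hj
    have hti : (0 : ℝ) < (i : ℝ) / n := div_pos (by exact_mod_cast hi1) hn0
    have htj : (0 : ℝ) < (j : ℝ) / n := div_pos (by exact_mod_cast hj1) hn0
    by_cases hij : i = j
    · rw [if_pos hij, abs_zero]
      exact mul_nonneg (hb0 i) (hb0 j)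
    rw [if_neg hij]
    have hRw : 0 ≤ RH H ((i : ℝ) / n) ((j : ℝ) / n) ^ (2 * m) *
          ((i : ℝ) / n) ^ (-(H * (2 * (m : ℝ) + 1))) *
          ((j : ℝ) / n) ^ (-(H * (2 * (m : ℝ) + 1))) := by
      apply mul_nonneg (mul_nonneg _ (Real.rpow_nonneg hti.le _)) (Real.rpow_nonneg htj.le _)
      exact pow_nonneg (RH_nonneg hH hti.le htj.le) _
    rw [abs_mul, abs_mul, abs_of_nonneg hRw]
    have h1 := pair_bound hH hH1.le m hti htj
    have h2 := dcoef_abs_le (α := α) (ε := ε) (n := n) (i := i) hH hα hε hθ0 hθ1 hm hi1 hn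
    have h3 := dcoef_abs_le (α := α) (ε := ε) (n := n) (i := j) hH hα hε hθ0 hθ1 hm hj1 hn
    have key : RH H ((i : ℝ) / n) ((j : ℝ) / n) ^ (2 * m) *
          ((i : ℝ) / n) ^ (-(H * (2 * (m : ℝ) + 1))) *
          ((j : ℝ) / n) ^ (-(H * (2 * (m : ℝ) + 1))) *
          |dcoef H α m ε n i| * |dcoef H α m ε n j|
        ≤ (((i : ℝ) / n) ^ (-H) * ((j : ℝ) / n) ^ (-H)) *
          (C * ((i : ℝ) / n) ^ (2 * H * (-θ))) * (C * ((j : ℝ) / n) ^ (2 * H * (-θ))) := by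
      apply mul_le_mul
      · apply mul_le_mul h1 h2 (abs_nonneg _) (by positivity)
      · exact h3
      · exact abs_nonneg _
      · positivity
    refine key.trans (le_of_eq ?_)
    have merge : ∀ u : ℝ, 0 < u → u ^ (-H) * u ^ (2 * H * (-θ)) = u ^ (-β) := by
      intro u hu
      rw [← Real.rpow_add hu]
      congr 1
      rw [hβ]; ring
    calc (((i : ℝ) / n) ^ (-H) * ((j : ℝ) / n) ^ (-H)) *
          (C * ((i : ℝ) / n) ^ (2 * H * (-θ))) * (C * ((j : ℝ) / n) ^ (2 * H * (-θ)))
        = (C * (((i : ℝ) / n) ^ (-H) * ((i : ℝ) / n) ^ (2 * H * (-θ)))) *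
          (C * (((j : ℝ) / n) ^ (-H) * ((j : ℝ) / n) ^ (2 * H * (-θ)))) := by ring
      _ = b i * b j := by rw [merge _ hti, merge _ htj]
  -- now sum up
  have habs : |Am H α m ε n| ≤ ((n : ℝ) ^ 2)⁻¹ *
      ∑ i ∈ Finset.Ico 1 n, ∑ j ∈ Finset.Ico 1 n, b i * b j := by
    rw [Am, abs_mul, abs_of_nonneg (by positivity : (0:ℝ) ≤ ((n : ℝ) ^ 2)⁻¹)]
    apply mul_le_mul_of_nonneg_left _ (by positivity)
    calc |∑ i ∈ Finset.Ico 1 n, ∑ j ∈ Finset.Ico 1 n, _|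
        ≤ ∑ i ∈ Finset.Ico 1 n, |∑ j ∈ Finset.Ico 1 n, _| := Finset.abs_sum_le_sum_abs _ _
      _ ≤ ∑ i ∈ Finset.Ico 1 n, ∑ j ∈ Finset.Ico 1 n, b i * b j := by
          apply Finset.sum_le_sum
          intro i hi
          exact (Finset.abs_sum_le_sum_abs _ _).trans
            (Finset.sum_le_sum (fun j hj => entry_le i hi j hj))
  have hsq : ((n : ℝ) ^ 2)⁻¹ * ∑ i ∈ Finset.Ico 1 n, ∑ j ∈ Finset.Ico 1 n, b i * b j
      = ((n : ℝ)⁻¹ * ∑ i ∈ Finset.Ico 1 n, b i) ^ 2 := by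
    rw [← Finset.sum_mul_sum]
    ring
  have hsum : (n : ℝ)⁻¹ * ∑ i ∈ Finset.Ico 1 n, b i ≤ (1 - β)⁻¹ * C := by
    have : ∑ i ∈ Finset.Ico 1 n, b i = C * ∑ i ∈ Finset.Ico 1 n, ((i : ℝ) / n) ^ (-β) := by
      rw [Finset.mul_sum]
    rw [this]
    calc (n : ℝ)⁻¹ * (C * ∑ i ∈ Finset.Ico 1 n, ((i : ℝ) / n) ^ (-β))
        ≤ (n : ℝ)⁻¹ * (C * ((n : ℝ) / (1 - β))) := by
          apply mul_le_mul_of_nonneg_left _ (by positivity)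
          exact mul_le_mul_of_nonneg_left (sum_rpow_bound hβ0 hβ1 n) hC
      _ = (1 - β)⁻¹ * C := by field_simp
  calc |Am H α m ε n| ≤ ((n : ℝ)⁻¹ * ∑ i ∈ Finset.Ico 1 n, b i) ^ 2 := by rw [← hsq]; exact habs
    _ ≤ ((1 - β)⁻¹ * C) ^ 2 := by
        apply pow_le_pow_left₀ _ hsum
        positivity

theorem statement10 (H α : ℝ) (hH : 0 < H) (hH' : H < 1) (hα : 0 < α)
    (m : ℕ) (hm : 1 ≤ m) :
    Tendsto (fun ε : ℝ => Filter.limsup (fun n : ℕ => |Am H α m ε n|) atTop)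
      (nhdsWithin 0 (Set.Ioi 0)) (𝓝 0) := by
  set θ : ℝ := min 1 ((1 - H) / (4 * H)) with hθdef
  have hθ0 : 0 < θ := lt_min one_pos (div_pos (by linarith) (by linarith))
  have hθ1 : θ ≤ 1 := min_le_left _ _
  set β : ℝ := H + 2 * H * θ with hβdef
  have hβ1 : β < 1 := by
    have h2 : θ ≤ (1 - H) / (4 * H) := min_le_right _ _
    have : 2 * H * θ ≤ 2 * H * ((1 - H) / (4 * H)) :=
      mul_le_mul_of_nonneg_left h2 (by positivity)
    have he : 2 * H * ((1 - H) / (4 * H)) = (1 - H) / 2 := by field_simp; ring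
    rw [hβdef]; rw [he] at this; linarith
  set p : ℝ := (m : ℝ) + 1/2 with hpdef
  set ψ : ℝ → ℝ := fun ε => ((1 - β)⁻¹ * (p * ε) ^ θ) ^ 2 with hψdef
  set g : ℝ → ℝ := fun ε => Filter.limsup (fun n : ℕ => |Am H α m ε n|) atTop with hgdef
  -- continuity of the rpow-θ map at 0
  have hrpowcont : ContinuousAt (fun u : ℝ => u ^ θ) 0 :=
    Real.continuousAt_rpow_const 0 θ (Or.inr hθ0.le)
  have hzero : (0 : ℝ) ^ θ = 0 := Real.zero_rpow hθ0.ne'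
  -- the n-dependent second term tends to 0
  have hnt : Tendsto (fun n : ℕ => (p * ((1/2) * (n : ℝ) ^ (-(2 : ℝ) * (α + H)))) ^ θ)
      atTop (𝓝 0) := by
    have h1 : Tendsto (fun x : ℝ => x ^ (-(2 * (α + H)))) atTop (𝓝 0) :=
      tendsto_rpow_neg_atTop (by positivity)
    have h2 : Tendsto (fun n : ℕ => (n : ℝ) ^ (-(2 : ℝ) * (α + H))) atTop (𝓝 0) := by
      have := h1.comp (tendsto_natCast_atTop_atTop (R := ℝ))
      simpa [Function.comp_def, neg_mul] using this
    have h3 : Tendsto (fun n : ℕ => p * ((1/2) * (n : ℝ) ^ (-(2 : ℝ) * (α + H)))) atTop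
        (𝓝 0) := by
      have := (h2.const_mul (1/2 : ℝ)).const_mul p
      simpa using this
    have := hrpowcont.tendsto.comp h3
    simpa [Function.comp_def, hzero] using this
  -- per-ε limsup bound
  have key : ∀ ε : ℝ, 0 < ε → 0 ≤ g ε ∧ g ε ≤ ψ ε := by
    intro ε hε
    set v : ℕ → ℝ := fun n =>
      ((1 - β)⁻¹ * ((p * ε) ^ θ + (p * ((1/2) * (n : ℝ) ^ (-(2 : ℝ) * (α + H)))) ^ θ)) ^ 2
      with hvdef
    have hle : ∀ n, |Am H α m ε n| ≤ v n := fun n =>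
      Am_abs_le hH hH' hα hε hθ0 hθ1 hm hβdef hβ1 n
    have hvt : Tendsto v atTop (𝓝 (ψ ε)) := by
      have h4 : Tendsto (fun n : ℕ =>
          ((1 - β)⁻¹ * ((p * ε) ^ θ + (p * ((1/2) * (n : ℝ) ^ (-(2 : ℝ) * (α + H)))) ^ θ)))
          atTop (𝓝 ((1 - β)⁻¹ * ((p * ε) ^ θ + 0))) :=
        ((hnt.const_add ((p * ε) ^ θ)).const_mul ((1 - β)⁻¹))
      have h5 := h4.pow 2
      rw [add_zero] at h5
      exact h5
    have hbdd : IsBoundedUnder (· ≤ ·) atTop (fun n : ℕ => |Am H α m ε n|) :=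
      hvt.isBoundedUnder_le.mono_le (Eventually.of_forall hle)
    constructor
    · exact le_limsup_of_frequently_le (Frequently.of_forall fun n => abs_nonneg _) hbdd
    · have h6 : g ε ≤ Filter.limsup v atTop :=
        limsup_le_limsup (Eventually.of_forall hle)
          (isCoboundedUnder_le_of_le atTop (fun n => abs_nonneg _))
          hvt.isBoundedUnder_le
      rwa [hvt.limsup_eq] at h6
  -- ψ tends to 0 as ε → 0⁺
  have hψt : Tendsto ψ (nhdsWithin 0 (Set.Ioi 0)) (𝓝 0) := by
    have hinner : ContinuousAt (fun ε : ℝ => p * ε) 0 :=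
      (continuous_const.mul continuous_id).continuousAt
    have hout : ContinuousAt (fun u : ℝ => u ^ θ) ((fun ε : ℝ => p * ε) 0) := by
      simpa using hrpowcont
    have h7 : ContinuousAt (fun ε : ℝ => (p * ε) ^ θ) 0 := hout.comp hinner
    have hc : ContinuousAt ψ 0 := ((h7.const_mul ((1 - β)⁻¹)).pow 2)
    have hval : ψ 0 = 0 := by simp [hψdef, hzero]
    have := hc.tendsto.mono_left (nhdsWithin_le_nhds (s := Set.Ioi 0))
    rwa [hval] at this
  -- squeeze
  apply tendsto_of_tendsto_of_tendsto_of_le_of_le' tendsto_const_nhds hψt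
  · exact eventually_mem_nhdsWithin.mono (fun ε hε => (key ε hε).1)
  · exact eventually_mem_nhdsWithin.mono (fun ε hε => (key ε hε).2)
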